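/- Let H be a cut graph of a graph G embedded on a surface S, so that cutting S along H yields a disk D, and let x, y be two distinct vertices of H appearing on the boundary of D. Then there exists a one-sided walk from x to y in H, i.e., an x-to-y walk X in H such that for every edge e of X, one copy of e lies on the boundary arc R of D and the other copy lies on the complementary boundary arc R'. -/

import Mathlib

open SimpleGraph

lemma sum_parity {α : Type*} (A : Finset α) (f : α → ℕ) :
    (∑ e ∈ A, f e) % 2 = (A.filter (fun e => Odd (f e))).card % 2 := by
  classical
  rw [Finset.sum_nat_mod, Finset.card_filter]
  congr 1
  apply Finset.sum_congr rfl
  intro e _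
  rcases Nat.even_or_odd (f e) with h | h
  · rw [Nat.even_iff.mp h, if_neg (Nat.not_odd_iff_even.mpr h)]
  · rw [Nat.odd_iff.mp h, if_pos h]

lemma multiset_countP_parity {α : Type*} [DecidableEq α] (M : Multiset α) (p : α → Prop)
    [DecidablePred p] :
    (M.countP p) % 2 = (M.toFinset.filter (fun e => p e ∧ Odd (M.count e))).card % 2 := by
  have hsub : (M.filter p).toFinset ⊆ M.toFinset := by
    intro e he
    simp only [Multiset.mem_toFinset, Multiset.mem_filter] at he ⊢
    exact he.1
  have h0 : ∀ e ∈ M.toFinset, e ∉ (M.filter p).toFinset → (M.filter p).count e = 0 := by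
    intro e _ he
    exact Multiset.count_eq_zero_of_notMem (by simpa using he)
  have h1 : M.countP p = ∑ e ∈ M.toFinset, (if p e then M.count e else 0) := by
    rw [Multiset.countP_eq_card_filter, ← Multiset.toFinset_sum_count_eq (M.filter p),
      Finset.sum_subset hsub h0]
    exact Finset.sum_congr rfl fun e _ => Multiset.count_filter
  rw [h1, sum_parity]
  congr 2
  apply Finset.filter_congr
  intro e _
  by_cases hp : p e <;> simp [hp]

lemma walk_countP_parity {V : Type} [DecidableEq V] {H : SimpleGraph V} {a b : V}
    (W : H.Walk a b) (v : V) :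
    (W.edges.countP (fun e => v ∈ e)) % 2
      = ((if v = a then 1 else 0) + (if v = b then 1 else 0)) % 2 := by
  induction W with
  | nil =>
    rename_i u
    by_cases h : v = u <;> simp [h]
  | @cons a c b h W ih =>
    rw [Walk.edges_cons, List.countP_cons]
    have hac : a ≠ c := h.ne
    have hval : (if decide (v ∈ s(a, c)) = true then 1 else 0)
        = ((if v = a then 1 else 0) + (if v = c then 1 else 0)) := by
      rcases eq_or_ne v a with rfl | h1 <;> rcases eq_or_ne v c with rfl | h2
      · exact absurd rfl hac
      · simp [Sym2.mem_iff, h2]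
      · simp [Sym2.mem_iff, h1]
      · simp [Sym2.mem_iff, h1, h2]
    rw [hval]
    generalize (if v = a then 1 else 0) = ia at *
    generalize (if v = c then 1 else 0) = ic at *
    generalize (if v = b then 1 else 0) = ib at *
    omega

lemma exists_walk_of_parity {V : Type} [DecidableEq V] {H : SimpleGraph V} :
    ∀ (n : ℕ) (S : Finset (Sym2 V)) (_ : S.card = n) (a b : V) (_ : a ≠ b)
      (_ : ∀ e ∈ S, e ∈ H.edgeSet)
      (_ : ∀ v : V, Odd ((S.filter (fun e => v ∈ e)).card) ↔ (v = a ∨ v = b)),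
      ∃ X : H.Walk a b, ∀ e ∈ X.edges, e ∈ S := by
  intro n
  induction n using Nat.strong_induction_on with
  | _ n ih =>
    intro S hcard a b hab hS hdeg
    have ha : Odd ((S.filter (fun e => a ∈ e)).card) := (hdeg a).mpr (Or.inl rfl)
    have hne : (S.filter (fun e => a ∈ e)).Nonempty := by
      rw [← Finset.card_pos]
      rcases ha with ⟨k, hk⟩; omega
    obtain ⟨e, he⟩ := hne
    rw [Finset.mem_filter] at he
    obtain ⟨heS, hae⟩ := he
    obtain ⟨z, rfl⟩ := Sym2.mem_iff_exists.mp hae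
    have hadj : H.Adj a z := (H.mem_edgeSet).mp (hS _ heS)
    have haz : a ≠ z := hadj.ne
    by_cases hzb : z = b
    · subst hzb
      exact ⟨Walk.cons hadj Walk.nil, by simpa using heS⟩
    · set S' := S.erase s(a, z) with hS'
      have hnm : s(a, z) ∉ S' := Finset.notMem_erase _ _
      have hins : insert s(a, z) S' = S := Finset.insert_erase heS
      have hcard' : S'.card < n := by
        rw [← hcard, ← hins, Finset.card_insert_of_notMem hnm]; omega
      have hkey : ∀ v : V, (S.filter (fun e => v ∈ e)).card
          = (S'.filter (fun e => v ∈ e)).card + (if v = a ∨ v = z then 1 else 0) := by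
        intro v
        have hmem : v ∈ s(a, z) ↔ (v = a ∨ v = z) := Sym2.mem_iff
        rw [← hins, Finset.filter_insert]
        by_cases hv : v = a ∨ v = z
        · rw [if_pos (hmem.mpr hv), if_pos hv, Finset.card_insert_of_notMem (by
            simp only [Finset.mem_filter]; tauto)]
        · rw [if_neg (fun hh => hv (hmem.mp hh)), if_neg hv, add_zero]
      have hdeg' : ∀ v : V, Odd ((S'.filter (fun e => v ∈ e)).card) ↔ (v = z ∨ v = b) := by
        intro v
        have h1 := hdeg v
        have h2 := hkey v
        rw [Nat.odd_iff] at h1 ⊢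
        by_cases hv1 : v = a
        · subst hv1
          simp only [true_or, iff_true] at h1
          rw [if_pos (Or.inl rfl)] at h2
          simp only [haz, hab, or_self, iff_false]
          omega
        · by_cases hv2 : v = z
          · subst hv2
            simp only [hv1, hzb, or_self, iff_false] at h1
            rw [if_pos (Or.inr rfl)] at h2
            simp only [true_or, iff_true]
            omega
          · rw [if_neg (by tauto), add_zero] at h2
            simp only [hv1, false_or] at h1
            simp only [hv2, false_or]
            rw [← h2]
            exact h1
      obtain ⟨X', hX'⟩ := ih S'.card hcard' S' rfl z b hzb
        (fun e he => hS e (Finset.mem_of_mem_erase he)) hdeg'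
      refine ⟨Walk.cons hadj X', ?_⟩
      intro e he
      rw [Walk.edges_cons, List.mem_cons] at he
      rcases he with rfl | he
      · exact heS
      · exact Finset.mem_of_mem_erase (hX' e he)

/-- let `H` be a cut graph, and let `R`, `R'` be the two `x`-to-`y` walks
forming the boundary of the disk obtained by cutting the surface along `H` (combinatorially:
two walks in `H` from `x` to `y` which together traverse every edge of `H` exactly twice).
Then there is a one-sided walk from `x` to `y` in `H`: a walk each of whose edges has one
copy in `R` and its other copy in `R'`. -/
theorem one_sided_walk_exists {V : Type} [DecidableEq V] (H : SimpleGraph V) (x y : V) (hxy : x ≠ y)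
    (R R' : H.Walk x y)
    (hcover : ∀ e ∈ H.edgeSet, R.edges.count e + R'.edges.count e = 2) :
    ∃ X : H.Walk x y, ∀ e ∈ X.edges, R.edges.count e = 1 ∧ R'.edges.count e = 1 := by
  classical
  set M : Multiset (Sym2 V) := (R.edges : Multiset (Sym2 V)) with hM
  set T : Finset (Sym2 V) := M.toFinset.filter (fun e => Odd (M.count e)) with hT
  have hTedge : ∀ e ∈ T, e ∈ H.edgeSet := by
    intro e he
    rw [hT, Finset.mem_filter, Multiset.mem_toFinset, hM, Multiset.mem_coe] at he
    exact R.edges_subset_edgeSet he.1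
  have hdeg : ∀ v : V, Odd ((T.filter (fun e => v ∈ e)).card) ↔ (v = x ∨ v = y) := by
    intro v
    have h1 : T.filter (fun e => v ∈ e)
        = M.toFinset.filter (fun e => v ∈ e ∧ Odd (M.count e)) := by
      rw [hT, Finset.filter_filter]
      apply Finset.filter_congr; intro e _; tauto
    have h2 := multiset_countP_parity M (fun e => v ∈ e)
    have h3 : M.countP (fun e => v ∈ e) = R.edges.countP (fun e => v ∈ e) := by
      rw [hM]; simp [Multiset.coe_countP]
    have h4 := walk_countP_parity R v
    have hmain : (T.filter (fun e => v ∈ e)).card % 2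
        = ((if v = x then 1 else 0) + (if v = y then 1 else 0)) % 2 := by
      rw [h1, ← h2, h3, h4]
    rw [Nat.odd_iff, hmain]
    by_cases hv1 : v = x
    · by_cases hv2 : v = y
      · exact absurd (hv1.symm.trans hv2) hxy
      · simp [hv1, hv2, hxy, Ne.symm hxy]
    · by_cases hv2 : v = y <;> simp [hv1, hv2, hxy, Ne.symm hxy]
  obtain ⟨X, hX⟩ := exists_walk_of_parity T.card T rfl x y hxy hTedge hdeg
  refine ⟨X, ?_⟩
  intro e he
  have heT := hX e he
  rw [hT, Finset.mem_filter] at heT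
  have hodd : Odd (R.edges.count e) := by
    have h5 := heT.2
    rwa [hM, Multiset.coe_count] at h5
  have hcov := hcover e (X.edges_subset_edgeSet he)
  rw [Nat.odd_iff] at hodd
  omega
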